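/- arXiv:2006.15393 — 3 statements merged into one kernel-verified Lean document; each statement's English description precedes it below -/
import Mathlib

section
/- Let K be the closed unit disk in ℝ² and define, in polar coordinates, f(r,θ) = (r/2, θ) and g(r,θ) = (r, 2θ mod 2π). The action of the discrete semigroup S generated by f and g on K, given by f^n g^m(r,θ) = (r/2^n, 2^m θ mod 2π), is not super asymptotically nonexpansive: for x = (1,0) and t = f, no left ideal of S supported by f witnesses the super asymptotic nonexpansiveness condition at x. -/
open Metric Real

/-- `f(r,θ) = (r/2, θ)` in polar coordinates, i.e. scaling by `1/2`. -/
noncomputable def fmap : EuclideanSpace ℝ (Fin 2) → EuclideanSpace ℝ (Fin 2) :=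
  fun p => (1 / 2 : ℝ) • p

open Classical in
/-- `g(r,θ) = (r, 2θ mod 2π)` in polar coordinates; in Cartesian coordinates this is the
angle-doubling map `p ↦ ‖p‖⁻¹ • (p₀² − p₁², 2 p₀ p₁)` (and `g(0) = 0`). -/
noncomputable def gmap : EuclideanSpace ℝ (Fin 2) → EuclideanSpace ℝ (Fin 2) :=
  fun p => if p = 0 then 0 else WithLp.toLp 2 (‖p‖⁻¹ • ![(p 0) ^ 2 - (p 1) ^ 2, 2 * (p 0) * (p 1)])

/-- The discrete semigroup `S = {f^n g^m : (n,m) ∈ ℕ₀² \ {(0,0)}}`, written additively on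
the exponents. -/
def Spair : Type := {p : ℕ × ℕ // p ≠ (0, 0)}

instance : Add Spair :=
  ⟨fun a b => ⟨a.1 + b.1, fun h => a.2 (by
    have h1 : a.1.1 + b.1.1 = 0 := congrArg Prod.fst h
    have h2 : a.1.2 + b.1.2 = 0 := congrArg Prod.snd h
    exact Prod.ext (by omega) (by omega))⟩⟩

/-- The action of `S` on `ℝ²`: `f^n g^m`. -/
noncomputable def actS : Spair → EuclideanSpace ℝ (Fin 2) → EuclideanSpace ℝ (Fin 2) :=
  fun s => fmap^[s.1.1] ∘ gmap^[s.1.2]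

/-- The point `x = (1, 0)`, i.e. `(r,θ) = (1,0)` in polar coordinates. -/
noncomputable def x₀ : EuclideanSpace ℝ (Fin 2) := WithLp.toLp 2 ![1, 0]

/- Auxiliary definitions and lemmas -/

/-- Helper constructor for elements of `ℝ²` pinning the Euclidean norm instance. -/
noncomputable def vec (a b : ℝ) : EuclideanSpace ℝ (Fin 2) := WithLp.toLp 2 ![a, b]

lemma norm_vec (a b : ℝ) : ‖vec a b‖ = Real.sqrt (a ^ 2 + b ^ 2) := by
  rw [EuclideanSpace.norm_eq, Fin.sum_univ_two,
    show vec a b 0 = a from rfl, show vec a b 1 = b from rfl]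
  simp [sq_abs]

lemma smul_vec (r a b : ℝ) : r • vec a b = vec (r * a) (r * b) := by
  ext i; fin_cases i <;> simp [vec]

lemma sub_vec (a b c d : ℝ) : vec a b - vec c d = vec (a - c) (b - d) := by
  ext i; fin_cases i <;> simp [vec]

lemma vec_circle_ne_zero (θ : ℝ) : vec (cos θ) (sin θ) ≠ 0 := by
  intro h
  have h0 : cos θ = 0 := congrArg (fun v : EuclideanSpace ℝ (Fin 2) => v 0) h
  have h1 : sin θ = 0 := congrArg (fun v : EuclideanSpace ℝ (Fin 2) => v 1) h
  have := sin_sq_add_cos_sq θ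
  rw [h0, h1] at this; norm_num at this

lemma norm_circle (θ : ℝ) : ‖vec (cos θ) (sin θ)‖ = 1 := by
  rw [norm_vec, cos_sq_add_sin_sq, Real.sqrt_one]

lemma gmap_circle (θ : ℝ) :
    gmap (vec (cos θ) (sin θ)) = vec (cos (2 * θ)) (sin (2 * θ)) := by
  have h1 : gmap (vec (cos θ) (sin θ))
      = ‖vec (cos θ) (sin θ)‖⁻¹ • vec (cos θ ^ 2 - sin θ ^ 2) (2 * cos θ * sin θ) := by
    rw [gmap, if_neg (vec_circle_ne_zero θ)]
    rfl
  rw [h1, norm_circle, inv_one, one_smul, Real.cos_two_mul', Real.sin_two_mul]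
  ring_nf

lemma gmap_iter_circle (m : ℕ) (θ : ℝ) :
    gmap^[m] (vec (cos θ) (sin θ)) = vec (cos (2 ^ m * θ)) (sin (2 ^ m * θ)) := by
  induction m with
  | zero => simp
  | succ k ih =>
    rw [Function.iterate_succ_apply', ih, gmap_circle]
    rw [show (2 : ℝ) * (2 ^ k * θ) = 2 ^ (k + 1) * θ by ring]

lemma fmap_iter (n : ℕ) (p : EuclideanSpace ℝ (Fin 2)) :
    fmap^[n] p = ((1 / 2 : ℝ) ^ n) • p := by
  induction n with
  | zero => simp
  | succ k ih =>
    rw [Function.iterate_succ_apply', ih, fmap, smul_smul]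
    congr 1
    ring

lemma x₀_eq : x₀ = vec (cos 0) (sin 0) := by
  rw [x₀, vec, Real.cos_zero, Real.sin_zero]

/-- the action of `S` on the closed unit disk `K` is not super asymptotically
nonexpansive at `x = (1,0)`, `t = f`: there is no left ideal `I` of `S` supported by `t`
such that `‖s.x − s.y‖ ≤ ‖x − y‖` for all `s ∈ I` and all `y ∈ K`. -/
theorem action_not_superAsympNonexpansive :
    ¬ ∃ I : Set Spair,
      (I.Nonempty ∧ ∀ s : Spair, ∀ i ∈ I, s + i ∈ I) ∧
      (∀ i ∈ I, ∃ s : Spair, i = s + ⟨(1, 0), by simp⟩) ∧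
      (∀ s ∈ I, ∀ y ∈ closedBall (0 : EuclideanSpace ℝ (Fin 2)) 1,
        ‖actS s x₀ - actS s y‖ ≤ ‖x₀ - y‖) := by
  rintro ⟨I, ⟨⟨i, hi⟩, hIdeal⟩, -, hne⟩
  obtain ⟨⟨n, m₀⟩, hne0⟩ := i
  -- Enlarge the `g`-exponent: take `s = (n, M)` with `M = n + 2 + m₀`.
  set M : ℕ := n + 2 + m₀ with hM
  have hMne : ((n, M) : ℕ × ℕ) ≠ (0, 0) := by
    intro h
    rw [Prod.mk.injEq] at h
    omega
  set s : Spair := ⟨(n, M), hMne⟩ with hs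
  have hkne : ((0, n + 2) : ℕ × ℕ) ≠ (0, 0) := by
    intro h; rw [Prod.mk.injEq] at h; omega
  have a : Spair := ⟨(0, n + 2), hkne⟩
  have hadd : ∀ a' : Spair, a'.1 = (0, n + 2) → a' + ⟨(n, m₀), hne0⟩ = s := by
    intro a' ha'
    apply Subtype.ext
    show a'.1 + ((n, m₀) : ℕ × ℕ) = (n, M)
    rw [ha', Prod.mk_add_mk, Prod.mk.injEq]
    omega
  have hsI : s ∈ I := by
    rw [← hadd ⟨(0, n + 2), hkne⟩ rfl]
    exact hIdeal _ _ hi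
  -- The test point `y` at angle `θ = π / 2 ^ M` on the unit circle.
  set θ : ℝ := π / 2 ^ M with hθ
  have hθpos : 0 < θ := div_pos Real.pi_pos (by positivity)
  set y : EuclideanSpace ℝ (Fin 2) := vec (cos θ) (sin θ) with hy
  have hyK : y ∈ closedBall (0 : EuclideanSpace ℝ (Fin 2)) 1 := by
    rw [mem_closedBall, dist_zero_right, hy, norm_circle]
  have key := hne s hsI y hyK
  set c : ℝ := (1 / 2 : ℝ) ^ n with hc
  have hcpos : 0 < c := by positivity
  -- Compute `actS s x₀`.
  have hactx : actS s x₀ = vec c 0 := by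
    show fmap^[n] (gmap^[M] x₀) = _
    rw [x₀_eq, gmap_iter_circle, mul_zero, fmap_iter, ← hc, smul_vec,
      Real.cos_zero, Real.sin_zero, mul_one, mul_zero]
  -- Compute `actS s y`: the angle doubles `M` times, reaching `π`.
  have hacty : actS s y = vec (-c) 0 := by
    show fmap^[n] (gmap^[M] y) = _
    have h2M : (2 : ℝ) ^ M * θ = π := by
      rw [hθ]; field_simp
    rw [hy, gmap_iter_circle, h2M, Real.cos_pi, Real.sin_pi, fmap_iter, ← hc, smul_vec,
      mul_neg, mul_one, mul_zero]
  -- Left-hand side equals `2c`.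
  have hLHS : ‖actS s x₀ - actS s y‖ = 2 * c := by
    rw [hactx, hacty, sub_vec, sub_zero, sub_neg_eq_add, norm_vec,
      show (c + c) ^ 2 + (0 : ℝ) ^ 2 = (2 * c) ^ 2 by ring]
    exact Real.sqrt_sq (by positivity)
  -- Right-hand side is at most `θ`.
  have hRHS : ‖x₀ - y‖ ≤ θ := by
    rw [x₀_eq, hy, sub_vec, Real.cos_zero, Real.sin_zero, zero_sub, norm_vec]
    have hid : (1 - cos θ) ^ 2 + (-sin θ) ^ 2 = 4 * sin (θ / 2) ^ 2 := by
      have hcosθ : cos θ = cos (θ / 2) ^ 2 - sin (θ / 2) ^ 2 := by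
        have := Real.cos_two_mul' (θ / 2)
        rwa [show 2 * (θ / 2) = θ by ring] at this
      have hsinθ : sin θ = 2 * sin (θ / 2) * cos (θ / 2) := by
        have := Real.sin_two_mul (θ / 2)
        rwa [show 2 * (θ / 2) = θ by ring] at this
      rw [hcosθ, hsinθ]
      nlinarith [Real.sin_sq_add_cos_sq (θ / 2)]
    rw [hid]
    have hb : sin (θ / 2) ^ 2 ≤ (θ / 2) ^ 2 := Real.sin_sq_le_sq
    calc Real.sqrt (4 * sin (θ / 2) ^ 2) ≤ Real.sqrt (4 * (θ / 2) ^ 2) := by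
          apply Real.sqrt_le_sqrt; nlinarith
      _ = θ := by
          rw [show (4 : ℝ) * (θ / 2) ^ 2 = θ ^ 2 by ring]
          exact Real.sqrt_sq hθpos.le
  -- Derive the contradiction: `2c ≤ θ = π / 2^M < 4 / 2^M ≤ 4 / 2^(n+2) = c`.
  have h1 : 2 * c ≤ θ := hLHS ▸ le_trans key hRHS
  have h2 : θ < c := by
    rw [hθ, hc, hM]
    have hπ : π < 4 := by linarith [Real.pi_lt_d2]
    have h2M : (2 : ℝ) ^ (n + 2 + m₀) = 2 ^ n * 4 * 2 ^ m₀ := by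
      rw [pow_add, pow_add]; norm_num
    rw [div_lt_iff₀ (by positivity), h2M]
    have h4 : (1 : ℝ) ≤ 2 ^ m₀ := one_le_pow₀ (by norm_num)
    have h5 : (1 / 2 : ℝ) ^ n * 2 ^ n = 1 := by
      rw [← mul_pow]; norm_num
    nlinarith [pow_pos (show (0:ℝ) < 2 by norm_num) n, pow_pos (show (0:ℝ) < 1/2 by norm_num) n]
  linarith
end

section
/- Let S be a countably compact right reversible semitopological semigroup acting separately weakly continuously on a norm-separable subset K of a Banach space. If the action is asymptotically nonexpansive, then it is pointwise eventually nonexpansive. -/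
/-- A (nonempty) left ideal of a semigroup `S`: `I ≠ ∅` and `S * I ⊆ I`. -/
def IsLeftIdeal {S : Type*} [Semigroup S] (I : Set S) : Prop :=
  I.Nonempty ∧ ∀ s : S, ∀ i ∈ I, s * i ∈ I

/-- `S` is right reversible: any two closed left ideals of `S` intersect. -/
def RightReversible (S : Type*) [Semigroup S] [TopologicalSpace S] : Prop :=
  ∀ I J : Set S, IsLeftIdeal I → IsLeftIdeal J → IsClosed I → IsClosed J → (I ∩ J).Nonempty

/-- Asymptotically nonexpansive action. -/
def AsympNonexpansive {S E : Type*} [Semigroup S] [NormedAddCommGroup E]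
    (act : S → E → E) (K : Set E) : Prop :=
  ∀ x ∈ K, ∀ y ∈ K, ∃ I : Set S, IsLeftIdeal I ∧ ∀ s ∈ I, ‖act s x - act s y‖ ≤ ‖x - y‖

/-- Pointwise eventually nonexpansive action. -/
def PointwiseEventuallyNonexpansive {S E : Type*} [Semigroup S] [NormedAddCommGroup E]
    (act : S → E → E) (K : Set E) : Prop :=
  ∀ x ∈ K, ∃ I : Set S, IsLeftIdeal I ∧ ∀ s ∈ I, ∀ y ∈ K, ‖act s x - act s y‖ ≤ ‖x - y‖

/-- Evaluation of a dual functional is continuous for the weak topology. -/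
lemma weak_eval_continuous' {E : Type*} [NormedAddCommGroup E] [NormedSpace ℝ E]
    (f : StrongDual ℝ E) :
    Continuous fun v : WeakSpace ℝ E => f ((toWeakSpace ℝ E).symm v) :=
  WeakBilin.eval_continuous (topDualPairing ℝ E).flip f

/-- if a countably compact, right reversible semitopological semigroup `S`
acts separately weakly continuously on a norm-separable subset `K` of a Banach space and
the action is asymptotically nonexpansive, then it is pointwise eventually nonexpansive. -/
theorem asymp_implies_pointwiseEventually_of_countablyCompact
    {S E : Type*} [Semigroup S] [TopologicalSpace S] [T2Space S]
    [NormedAddCommGroup E] [NormedSpace ℝ E] [CompleteSpace E]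
    -- `S` is a semitopological semigroup: multiplication is separately continuous
    (hmulL : ∀ t : S, Continuous fun s => t * s)
    (hmulR : ∀ t : S, Continuous fun s => s * t)
    -- `S` is countably compact
    (hcc : ∀ F : ℕ → Set S, (∀ n, IsClosed (F n)) →
      (∀ t : Finset ℕ, (⋂ n ∈ t, F n).Nonempty) → (⋂ n, F n).Nonempty)
    (hrev : RightReversible S)
    (K : Set E) (hKsep : TopologicalSpace.IsSeparable K)
    (act : S → E → E) (hmaps : ∀ s : S, Set.MapsTo (act s) K K)
    (haction : ∀ s t : S, ∀ x ∈ K, act (s * t) x = act s (act t x))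
    -- the action is separately weakly continuous
    (hcontS : ∀ x ∈ K, Continuous fun s : S => toWeakSpace ℝ E (act s x))
    (hcontK : ∀ s : S, ContinuousOn
      (fun x : WeakSpace ℝ E => toWeakSpace ℝ E (act s ((toWeakSpace ℝ E).symm x)))
      (toWeakSpace ℝ E '' K))
    (han : AsympNonexpansive act K) :
    PointwiseEventuallyNonexpansive act K := by
  classical
  intro x hx
  -- a countable dense subset `D ⊆ K`
  have hsep : TopologicalSpace.SeparableSpace K := hKsep.separableSpace
  obtain ⟨T, hTc, hTd⟩ := TopologicalSpace.exists_countable_dense K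
  set D : Set E := Subtype.val '' T with hD
  have hDc : D.Countable := hTc.image _
  have hDK : D ⊆ K := by rintro _ ⟨⟨z, hz⟩, _, rfl⟩; exact hz
  have hDd : ∀ y ∈ K, y ∈ closure D := by
    intro y hy
    have h1 : (⟨y, hy⟩ : K) ∈ closure T := hTd _
    exact map_mem_closure continuous_subtype_val h1 (Set.mapsTo_image _ _)
  have hDne : D.Nonempty := by
    rcases (closure_nonempty_iff.mp ⟨x, hDd x hx⟩) with h; exact h
  obtain ⟨yseq, hyseq⟩ := hDc.exists_eq_range hDne
  have hyK : ∀ n, yseq n ∈ K := fun n => hDK (hyseq ▸ Set.mem_range_self n)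
  -- ideals for each point of the dense set
  choose I hIdeal hIle using fun n => han x hx (yseq n) (hyK n)
  set J : ℕ → Set S := fun n => closure (I n) with hJ
  have hJclosed : ∀ n, IsClosed (J n) := fun n => isClosed_closure
  have hJideal : ∀ n, IsLeftIdeal (J n) := by
    intro n
    refine ⟨(hIdeal n).1.mono subset_closure, fun s i hi => ?_⟩
    exact map_mem_closure (hmulL s) hi (fun j hj => (hIdeal n).2 s j hj)
  -- the nonexpansiveness bound survives closure, via dual functionals
  have hclaim : ∀ n, ∀ g : StrongDual ℝ E, ∀ s ∈ J n,
      g (act s x) - g (act s (yseq n)) ≤ ‖x - yseq n‖ * ‖g‖ := by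
    intro n g
    have hc1 : Continuous fun s : S => g (act s x) :=
      (weak_eval_continuous' g).comp (hcontS x hx)
    have hc2 : Continuous fun s : S => g (act s (yseq n)) :=
      (weak_eval_continuous' g).comp (hcontS (yseq n) (hyK n))
    have hAclosed : IsClosed {s : S | g (act s x) - g (act s (yseq n)) ≤ ‖x - yseq n‖ * ‖g‖} :=
      isClosed_le (hc1.sub hc2) continuous_const
    have hsub : I n ⊆ {s : S | g (act s x) - g (act s (yseq n)) ≤ ‖x - yseq n‖ * ‖g‖} := by
      intro s hs
      have h1 : g (act s x) - g (act s (yseq n)) = g (act s x - act s (yseq n)) := by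
        rw [map_sub]
      calc g (act s x) - g (act s (yseq n)) = g (act s x - act s (yseq n)) := h1
        _ ≤ ‖g (act s x - act s (yseq n))‖ := Real.le_norm_self _
        _ ≤ ‖g‖ * ‖act s x - act s (yseq n)‖ := g.le_opNorm _
        _ ≤ ‖g‖ * ‖x - yseq n‖ :=
            mul_le_mul_of_nonneg_left (hIle n s hs) (norm_nonneg g)
        _ = ‖x - yseq n‖ * ‖g‖ := mul_comm _ _
    exact fun s hs => closure_minimal hsub hAclosed hs
  have hJle : ∀ n, ∀ s ∈ J n, ‖act s x - act s (yseq n)‖ ≤ ‖x - yseq n‖ := by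
    intro n s hs
    refine NormedSpace.norm_le_dual_bound ℝ _ (norm_nonneg _) (fun f => ?_)
    have h1 := hclaim n f s hs
    have h2 := hclaim n (-f) s hs
    simp only [ContinuousLinearMap.neg_apply, norm_neg] at h2
    rw [map_sub, Real.norm_eq_abs]
    exact abs_le.mpr ⟨by linarith, h1⟩
  -- finite intersections of the `J n` are closed left ideals
  have hfin : ∀ t : Finset ℕ, IsLeftIdeal (⋂ n ∈ t, J n) ∧ IsClosed (⋂ n ∈ t, J n) := by
    intro t
    induction t using Finset.induction_on with
    | empty =>
      simp only [Finset.notMem_empty, Set.iInter_of_empty, Set.iInter_univ]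
      obtain ⟨s0, _⟩ := (hJideal 0).1
      exact ⟨⟨⟨s0, trivial⟩, fun _ _ _ => trivial⟩, isClosed_univ⟩
    | insert _ _ ha ih =>
      rename_i a t'
      rw [Finset.set_biInter_insert]
      obtain ⟨⟨hne, hid⟩, hcl⟩ := ih
      refine ⟨⟨hrev _ _ (hJideal a) ⟨hne, hid⟩ (hJclosed a) hcl, ?_⟩,
        (hJclosed a).inter hcl⟩
      rintro s i ⟨hi1, hi2⟩
      exact ⟨(hJideal a).2 s i hi1, hid s i hi2⟩
  -- the countable intersection is a nonempty closed left ideal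
  have hInter : (⋂ n, J n).Nonempty := hcc J hJclosed (fun t => (hfin t).1.1)
  refine ⟨⋂ n, J n, ⟨hInter, fun s i hi => Set.mem_iInter.2
    fun n => (hJideal n).2 s i (Set.mem_iInter.1 hi n)⟩, ?_⟩
  intro s hs y hy
  -- approximate `y` by the dense set
  obtain ⟨d, hdD, hdlim⟩ := mem_closure_iff_seq_limit.mp (hDd y hy)
  have hbound : ∀ k, ‖act s x - act s (d k)‖ ≤ ‖x - d k‖ := by
    intro k
    obtain ⟨n, hn⟩ : d k ∈ Set.range yseq := hyseq ▸ hdD k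
    have := hJle n s (Set.mem_iInter.1 hs n)
    rwa [hn] at this
  -- weak convergence `act s (d k) → act s y`
  have hwk : Filter.Tendsto (fun k => toWeakSpace ℝ E (act s (d k))) Filter.atTop
      (nhds (toWeakSpace ℝ E (act s y))) := by
    have h1 : Filter.Tendsto (fun k => (toWeakSpaceCLM ℝ E) (d k)) Filter.atTop
        (nhds ((toWeakSpaceCLM ℝ E) y)) :=
      ((toWeakSpaceCLM ℝ E).continuous.tendsto y).comp hdlim
    have h3 : Filter.Tendsto (fun k => (toWeakSpaceCLM ℝ E) (d k)) Filter.atTop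
        (nhdsWithin ((toWeakSpaceCLM ℝ E) y) (toWeakSpace ℝ E '' K)) := by
      refine tendsto_nhdsWithin_of_tendsto_nhds_of_eventually_within _ h1
        (Filter.Eventually.of_forall fun k => ⟨d k, hDK (hdD k), rfl⟩)
    have h2 := (hcontK s ((toWeakSpace ℝ E) y) ⟨y, hy, rfl⟩).tendsto.comp h3
    simpa [Function.comp_def] using h2
  have key : ∀ g : StrongDual ℝ E, g (act s x - act s y) ≤ ‖x - y‖ * ‖g‖ := by
    intro g
    have hev : Filter.Tendsto (fun k => g (act s (d k))) Filter.atTop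
        (nhds (g (act s y))) := by
      have := ((weak_eval_continuous' g).tendsto _).comp hwk
      simpa [Function.comp_def] using this
    have hg : Filter.Tendsto (fun k => g (act s x - act s (d k))) Filter.atTop
        (nhds (g (act s x - act s y))) := by
      have h4 : Filter.Tendsto (fun k => g (act s x) - g (act s (d k))) Filter.atTop
          (nhds (g (act s x) - g (act s y))) := tendsto_const_nhds.sub hev
      simpa [map_sub] using h4
    have hb : Filter.Tendsto (fun k => ‖x - d k‖ * ‖g‖) Filter.atTop
        (nhds (‖x - y‖ * ‖g‖)) :=
      ((tendsto_const_nhds.sub hdlim).norm).mul_const ‖g‖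
    refine le_of_tendsto_of_tendsto' hg hb (fun k => ?_)
    calc g (act s x - act s (d k)) ≤ ‖g (act s x - act s (d k))‖ := Real.le_norm_self _
      _ ≤ ‖g‖ * ‖act s x - act s (d k)‖ := g.le_opNorm _
      _ ≤ ‖g‖ * ‖x - d k‖ := mul_le_mul_of_nonneg_left (hbound k) (norm_nonneg g)
      _ = ‖x - d k‖ * ‖g‖ := mul_comm _ _
  refine NormedSpace.norm_le_dual_bound ℝ _ (norm_nonneg _) (fun f => ?_)
  have h1 := key f
  have h2 := key (-f)
  simp only [ContinuousLinearMap.neg_apply, norm_neg] at h2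
  rw [Real.norm_eq_abs]
  exact abs_le.mpr ⟨by linarith, h1⟩
end

section
/- Let S be a compact right reversible semitopological semigroup acting separately weakly continuously and asymptotically nonexpansively on a subset K of a Banach space. Then the action is super asymptotically nonexpansive. -/
/-- Super asymptotically nonexpansive action. -/
def SuperAsympNonexpansive {S E : Type*} [Semigroup S] [NormedAddCommGroup E]
    (act : S → E → E) (K : Set E) : Prop :=
  ∀ x ∈ K, ∀ t : S, ∃ I : Set S, IsLeftIdeal I ∧ I ⊆ Set.range (· * t) ∧
    ∀ s ∈ I, ∀ y ∈ K, ‖act s x - act s y‖ ≤ ‖x - y‖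

section helpers
variable {E : Type*} [NormedAddCommGroup E] [NormedSpace ℝ E]

/-- The norm ball condition is weakly closed. -/
lemma weak_isClosed_norm_le (c : ℝ) (hc : 0 ≤ c) :
    IsClosed {z : WeakSpace ℝ E | ‖(toWeakSpace ℝ E).symm z‖ ≤ c} := by
  have hset : {z : WeakSpace ℝ E | ‖(toWeakSpace ℝ E).symm z‖ ≤ c}
      = ⋂ (f : E →L[ℝ] ℝ) (_ : ‖f‖ ≤ 1),
        {z : WeakSpace ℝ E | f ((toWeakSpace ℝ E).symm z) ≤ c} := by
    ext z
    simp only [Set.mem_setOf_eq, Set.mem_iInter]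
    constructor
    · intro h f hf
      calc f ((toWeakSpace ℝ E).symm z) ≤ ‖f ((toWeakSpace ℝ E).symm z)‖ := le_abs_self _
        _ ≤ ‖f‖ * ‖(toWeakSpace ℝ E).symm z‖ := f.le_opNorm _
        _ ≤ 1 * c := by
            apply mul_le_mul hf h (norm_nonneg _) zero_le_one
        _ = c := one_mul c
    · intro h
      by_cases hz : (toWeakSpace ℝ E).symm z = 0
      · rw [hz, norm_zero]; exact hc
      · obtain ⟨g, hg1, hgv⟩ := exists_dual_vector ℝ _ (norm_ne_zero_iff.mpr hz)
        have := h g hg1.le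
        rw [hgv] at this
        exact_mod_cast this
  rw [hset]
  refine isClosed_iInter fun f => isClosed_iInter fun _ => ?_
  have hcont : Continuous fun z : WeakSpace ℝ E => f ((toWeakSpace ℝ E).symm z) :=
    WeakBilin.eval_continuous (topDualPairing ℝ E).flip f
  exact isClosed_le hcont continuous_const

end helpers

/-- a separately weakly continuous, asymptotically nonexpansive action of a
compact right reversible semitopological semigroup on a subset of a Banach space is super
asymptotically nonexpansive. -/
theorem asymp_implies_superAsymp_of_compact
    {S E : Type*} [Semigroup S] [TopologicalSpace S] [T2Space S] [CompactSpace S]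
    [NormedAddCommGroup E] [NormedSpace ℝ E] [CompleteSpace E]
    -- `S` is a semitopological semigroup: multiplication is separately continuous
    (hmulL : ∀ t : S, Continuous fun s => t * s)
    (hmulR : ∀ t : S, Continuous fun s => s * t)
    (hrev : RightReversible S)
    (K : Set E)
    (act : S → E → E) (hmaps : ∀ s : S, Set.MapsTo (act s) K K)
    (haction : ∀ s t : S, ∀ x ∈ K, act (s * t) x = act s (act t x))
    -- the action is separately weakly continuous
    (hcontS : ∀ x ∈ K, Continuous fun s : S => toWeakSpace ℝ E (act s x))
    (hcontK : ∀ s : S, ContinuousOn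
      (fun x : WeakSpace ℝ E => toWeakSpace ℝ E (act s ((toWeakSpace ℝ E).symm x)))
      (toWeakSpace ℝ E '' K))
    (han : AsympNonexpansive act K) :
    SuperAsympNonexpansive act K := by
  intro x hx t
  -- the collection of closed left ideals
  have hinter : ∀ I J : Set S, (IsLeftIdeal I ∧ IsClosed I) → (IsLeftIdeal J ∧ IsClosed J) →
      IsLeftIdeal (I ∩ J) ∧ IsClosed (I ∩ J) := by
    rintro I J ⟨hI, hIc⟩ ⟨hJ, hJc⟩
    refine ⟨⟨hrev I J hI hJ hIc hJc, ?_⟩, hIc.inter hJc⟩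
    rintro s i ⟨hiI, hiJ⟩
    exact ⟨hI.2 s i hiI, hJ.2 s i hiJ⟩
  -- S is nonempty since we have t
  have huniv : IsLeftIdeal (Set.univ : Set S) ∧ IsClosed (Set.univ : Set S) :=
    ⟨⟨⟨t, trivial⟩, fun _ _ _ => trivial⟩, isClosed_univ⟩
  -- the intersection of all closed left ideals is nonempty
  set M : Set S := ⋂₀ {I : Set S | IsLeftIdeal I ∧ IsClosed I} with hM
  have hMne : M.Nonempty := by
    by_contra hemp
    rw [Set.not_nonempty_iff_eq_empty] at hemp
    have h0 : (Set.univ : Set S) ∩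
        ⋂ (I : {I : Set S // IsLeftIdeal I ∧ IsClosed I}), (I : Set S) = ∅ := by
      rw [Set.univ_inter, ← hemp, hM, Set.sInter_eq_iInter]
      rfl
    obtain ⟨F, hF⟩ := isCompact_univ.elim_finite_subfamily_closed
      (fun I : {I : Set S // IsLeftIdeal I ∧ IsClosed I} => (I : Set S))
      (fun I => I.2.2) h0
    -- finite intersection is nonempty: induct
    have : ∀ G : Finset {I : Set S // IsLeftIdeal I ∧ IsClosed I},
        IsLeftIdeal (⋂ I ∈ G, (I : Set S)) ∧ IsClosed (⋂ I ∈ G, (I : Set S)) := by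
      intro G
      classical
      induction G using Finset.induction with
      | empty => simpa using huniv
      | insert hnotmem ih =>
        rename_i a G'
        rw [Finset.set_biInter_insert]
        exact hinter _ _ hnotmem.2 G'
    obtain ⟨s, hs⟩ := (this F).1.1
    rw [Set.univ_inter] at hF
    exact absurd (hF ▸ hs) (Set.notMem_empty s)
  -- M is a left ideal
  have hMideal : IsLeftIdeal M := by
    refine ⟨hMne, fun s i hi => ?_⟩
    intro J hJ
    exact hJ.1.2 s i (hi J hJ)
  -- S * t is a closed left ideal
  have hSt : Set.range (· * t) ∈ {I : Set S | IsLeftIdeal I ∧ IsClosed I} := by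
    refine ⟨⟨⟨t * t, t, rfl⟩, ?_⟩, (isCompact_range (hmulR t)).isClosed⟩
    rintro s i ⟨u, rfl⟩
    exact ⟨s * u, mul_assoc s u t⟩
  refine ⟨M, hMideal, Set.sInter_subset_of_mem hSt, ?_⟩
  -- the uniform estimate
  intro s hs y hy
  obtain ⟨I, hI, hIest⟩ := han x hx y hy
  -- the set where the estimate holds is closed
  have hA : IsClosed {u : S | ‖act u x - act u y‖ ≤ ‖x - y‖} := by
    have hc : Continuous fun u : S =>
        toWeakSpace ℝ E (act u x) - toWeakSpace ℝ E (act u y) :=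
      (hcontS x hx).sub (hcontS y hy)
    exact (weak_isClosed_norm_le (E := E) ‖x - y‖ (norm_nonneg _)).preimage hc
  -- closure of I is a closed left ideal
  have hclI : IsLeftIdeal (closure I) ∧ IsClosed (closure I) := by
    refine ⟨⟨hI.1.mono subset_closure, fun u i hi => ?_⟩, isClosed_closure⟩
    have hmap : Set.MapsTo (fun v => u * v) (closure I) (closure I) :=
      (Set.MapsTo.closure (fun v hv => hI.2 u v hv) (hmulL u))
    exact hmap hi
  have hsub : closure I ⊆ {u : S | ‖act u x - act u y‖ ≤ ‖x - y‖} :=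
    closure_minimal (fun u hu => hIest u hu) hA
  exact hsub (hs (closure I) hclI)
end
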